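/- Fix r ≥ 1 and weights w_0,…,w_{r−1} : ℕ → ℂ with Σ_{k=0}^∞ k^j |w_ℓ(k)| < ∞ for every j ∈ ℕ and every ℓ. Assume the system is perfect, and for each multi-index m let P_m denote the unique monic m-orthogonal polynomial of degree |m|. Let n ∈ ℕ^r satisfy n_ℓ ≥ 1 for all ℓ. Then the r polynomials P_{n−e_0}, …, P_{n−e_{r−1}} form a basis of the ℂ-vector subspace V of ℂ[X] consisting of all polynomials Q with deg Q ≤ |n|−1 such that Σ_{k=0}^∞ Q(k) q(k) w_ℓ(k) = 0 for every ℓ ∈ {0,…,r−1} and every polynomial q with deg q ≤ n_ℓ−2; in particular, every Q ∈ V is a unique ℂ-linear combination of P_{n−e_0}, …, P_{n−e_{r−1}}. -/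

import Mathlib

open Polynomial

/-- `P` is `m`-orthogonal with respect to the discrete weights `w ℓ` on `ℕ`:
`∑_{k} P(k) q(k) w_ℓ(k) = 0` for every `ℓ` and every polynomial `q` of degree `≤ m_ℓ - 1`
(equivalently, `deg q < m_ℓ`). -/
def IsMultiOrth {r : ℕ} (w : Fin r → ℕ → ℂ) (m : Fin r → ℕ) (P : Polynomial ℂ) : Prop :=
  ∀ ℓ : Fin r, ∀ q : Polynomial ℂ, q.degree < (m ℓ : WithBot ℕ) →
    ∑' k : ℕ, P.eval (k : ℂ) * q.eval (k : ℂ) * w ℓ k = 0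

namespace MOAux

/-- The moment condition for a single weight. -/
def Mom (w : ℕ → ℂ) : Prop :=
  ∀ j : ℕ, Summable fun k : ℕ => (k : ℝ) ^ j * ‖w k‖

/-- The basic linear functional `Q ↦ ∑' k, Q(k) w(k)`. -/
noncomputable def T (w : ℕ → ℂ) (Q : Polynomial ℂ) : ℂ := ∑' k : ℕ, Q.eval (k : ℂ) * w k

variable {w : ℕ → ℂ}

lemma summable_eval (hw : Mom w) (Q : Polynomial ℂ) :
    Summable fun k : ℕ => Q.eval (k : ℂ) * w k := by
  have h1 : ∀ i : ℕ, Summable fun k : ℕ => Q.coeff i * ((k : ℂ) ^ i * w k) := by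
    intro i
    apply Summable.mul_left
    apply Summable.of_norm
    have := hw i
    convert this using 2 with k
    simp
  have h2 : (fun k : ℕ => Q.eval (k : ℂ) * w k)
      = fun k : ℕ => ∑ i ∈ Finset.range (Q.natDegree + 1), Q.coeff i * ((k : ℂ) ^ i * w k) := by
    funext k
    rw [Polynomial.eval_eq_sum_range, Finset.sum_mul]
    exact Finset.sum_congr rfl fun i _ => by ring
  rw [h2]
  exact summable_sum fun i _ => h1 i

lemma T_smul (c : ℂ) (A : Polynomial ℂ) : T w (c • A) = c * T w A := by
  unfold T
  rw [← tsum_mul_left]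
  exact tsum_congr fun k => by simp [mul_assoc]

lemma T_add (hw : Mom w) (A B : Polynomial ℂ) : T w (A + B) = T w A + T w B := by
  unfold T
  rw [← Summable.tsum_add (summable_eval hw A) (summable_eval hw B)]
  exact tsum_congr fun k => by simp [add_mul]

lemma T_sub (hw : Mom w) (A B : Polynomial ℂ) : T w (A - B) = T w A - T w B := by
  have h := T_add hw (A - B) B
  rw [show A - B + B = A by ring] at h
  rw [h]; ring

lemma T_sum (hw : Mom w) {ι : Type*} (s : Finset ι) (f : ι → Polynomial ℂ) :
    T w (∑ i ∈ s, f i) = ∑ i ∈ s, T w (f i) := by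
  unfold T
  rw [← Summable.tsum_finsetSum fun i (_ : i ∈ s) => summable_eval hw (f i)]
  exact tsum_congr fun k => by simp [Polynomial.eval_finset_sum, Finset.sum_mul]

lemma T_mul (A q : Polynomial ℂ) :
    T w (A * q) = ∑' k : ℕ, A.eval (k : ℂ) * q.eval (k : ℂ) * w k :=
  tsum_congr fun k => by rw [Polynomial.eval_mul]

lemma isMultiOrth_iff {r : ℕ} (w : Fin r → ℕ → ℂ) (m : Fin r → ℕ) (Q : Polynomial ℂ) :
    IsMultiOrth w m Q ↔
      ∀ ℓ : Fin r, ∀ q : Polynomial ℂ, q.degree < (m ℓ : WithBot ℕ) →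
        T (w ℓ) (Q * q) = 0 := by
  unfold IsMultiOrth
  refine forall_congr' fun ℓ => forall_congr' fun q => imp_congr_right fun hq => ?_
  rw [T_mul]

lemma sum_sub_ite {r : ℕ} (m : Fin r → ℕ) (ℓ : Fin r) (h : 1 ≤ m ℓ) :
    ∑ i, (m i - if i = ℓ then 1 else 0) = (∑ i, m i) - 1 := by
  have h1 : ∑ i, (m i - if i = ℓ then 1 else 0) + ∑ i, (if i = ℓ then 1 else 0)
      = ∑ i, m i := by
    rw [← Finset.sum_add_distrib]
    refine Finset.sum_congr rfl fun i _ => ?_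
    by_cases hi : i = ℓ <;> simp [hi] <;> omega
  have h2 : ∑ i, (if i = ℓ then (1:ℕ) else 0) = 1 := by simp
  omega

/-- The key vanishing lemma: an `m`-orthogonal polynomial of degree `< ∑ m` is zero. -/
lemma eq_zero_of_orth {r : ℕ} (w : Fin r → ℕ → ℂ)
    (hmom : ∀ ℓ : Fin r, Mom (w ℓ))
    (P : (Fin r → ℕ) → Polynomial ℂ)
    (hP : ∀ m : Fin r → ℕ, (P m).Monic ∧ (P m).natDegree = ∑ i, m i ∧
      IsMultiOrth w m (P m) ∧
      ∀ Q : Polynomial ℂ, Q.Monic → Q.natDegree = ∑ i, m i → IsMultiOrth w m Q → Q = P m) :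
    ∀ N : ℕ, ∀ m : Fin r → ℕ, (∑ i, m i) = N →
      ∀ Q : Polynomial ℂ, Q.degree < (N : WithBot ℕ) → IsMultiOrth w m Q → Q = 0 := by
  intro N
  induction N using Nat.strong_induction_on with
  | _ N IH =>
    intro m hm Q hdeg horth
    by_cases hQ : Q = 0
    · exact hQ
    exfalso
    have hd : Q.natDegree < N := (Polynomial.natDegree_lt_iff_degree_lt hQ).mpr hdeg
    rcases eq_or_lt_of_le (Nat.succ_le_of_lt hd) with h | h
    · -- natDegree Q + 1 = N : use uniqueness at m
      set c := Q.leadingCoeff with hc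
      have hc0 : c ≠ 0 := Polynomial.leadingCoeff_ne_zero.mpr hQ
      set Q' := c⁻¹ • Q with hQ'def
      have hQ'C : Q' = Polynomial.C c⁻¹ * Q := by rw [hQ'def, Polynomial.smul_eq_C_mul]
      have hQ'deg : Q'.degree = Q.degree := by
        rw [hQ'C, Polynomial.degree_C_mul (inv_ne_zero hc0)]
      have hmon : Q'.Monic := by
        unfold Polynomial.Monic
        rw [hQ'C, Polynomial.leadingCoeff_mul, Polynomial.leadingCoeff_C, ← hc,
          inv_mul_cancel₀ hc0]
      have horthQ' : IsMultiOrth w m Q' := by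
        rw [isMultiOrth_iff] at horth ⊢
        intro ℓ q hq
        rw [hQ'def, smul_mul_assoc, T_smul, horth ℓ q hq, mul_zero]
      have hPm := hP m
      have hdegPm : (P m).degree = (N : WithBot ℕ) := by
        rw [Polynomial.degree_eq_natDegree hPm.1.ne_zero, hPm.2.1, hm]
      have hlt : Q'.degree < (P m).degree := by rw [hQ'deg, hdegPm]; exact hdeg
      have hRmon : (P m + Q').Monic := hPm.1.add_of_left hlt
      have hRdeg : (P m + Q').natDegree = ∑ i, m i := by
        rw [Polynomial.natDegree_eq_of_degree_eq (Polynomial.degree_add_eq_left_of_degree_lt hlt),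
          hPm.2.1]
      have hRorth : IsMultiOrth w m (P m + Q') := by
        rw [isMultiOrth_iff] at horthQ' ⊢
        have horthPm := (isMultiOrth_iff w m (P m)).mp hPm.2.2.1
        intro ℓ q hq
        rw [add_mul, T_add (hmom ℓ), horthPm ℓ q hq, horthQ' ℓ q hq, add_zero]
      have := hPm.2.2.2 _ hRmon hRdeg hRorth
      have hQ'0 : Q' = 0 := by
        have := add_eq_left.mp this
        exact this
      rw [hQ'def, smul_eq_zero] at hQ'0
      rcases hQ'0 with h0 | h0
      · exact inv_ne_zero hc0 h0
      · exact hQ h0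
    · -- natDegree Q + 1 < N : reduce to a smaller multi-index
      have hN : 0 < N := by omega
      obtain ⟨ℓ, hℓ⟩ : ∃ ℓ, m ℓ ≠ 0 := by
        by_contra hall
        push_neg at hall
        rw [Finset.sum_eq_zero (fun i _ => hall i)] at hm
        omega
      set m' : Fin r → ℕ := fun i => m i - if i = ℓ then 1 else 0 with hm'def
      have hm' : ∑ i, m' i = N - 1 := by
        rw [hm'def, sum_sub_ite m ℓ (Nat.one_le_iff_ne_zero.mpr hℓ), hm]
      have horth' : IsMultiOrth w m' Q := by
        intro ℓ' q hq
        refine horth ℓ' q (hq.trans_le ?_)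
        exact_mod_cast Nat.sub_le (m ℓ') _
      have hdeg' : Q.degree < ((N - 1 : ℕ) : WithBot ℕ) := by
        refine (Polynomial.natDegree_lt_iff_degree_lt hQ).mp ?_
        omega
      exact hQ (IH (N - 1) (by omega) m' hm' Q hdeg' horth')

end MOAux

open MOAux in
theorem basis_of_nearest_neighbors (r : ℕ) (hr : 1 ≤ r) (w : Fin r → ℕ → ℂ)
    (hmom : ∀ j : ℕ, ∀ ℓ : Fin r,
      Summable (fun k : ℕ => (k : ℝ) ^ j * ‖w ℓ k‖))
    (P : (Fin r → ℕ) → Polynomial ℂ)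
    (hP : ∀ m : Fin r → ℕ, (P m).Monic ∧ (P m).natDegree = ∑ i, m i ∧
      IsMultiOrth w m (P m) ∧
      ∀ Q : Polynomial ℂ, Q.Monic → Q.natDegree = ∑ i, m i → IsMultiOrth w m Q → Q = P m)
    (n : Fin r → ℕ) (hn : ∀ ℓ, 1 ≤ n ℓ) :
    LinearIndependent ℂ (fun ℓ : Fin r => P (fun i => n i - if i = ℓ then 1 else 0)) ∧
    (∀ ℓ : Fin r,
      (P (fun i => n i - if i = ℓ then 1 else 0)).degree < ((∑ i, n i : ℕ) : WithBot ℕ) ∧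
      ∀ ℓ' : Fin r, ∀ q : Polynomial ℂ, q.degree < ((n ℓ' - 1 : ℕ) : WithBot ℕ) →
        ∑' k : ℕ, (P (fun i => n i - if i = ℓ then 1 else 0)).eval (k : ℂ) *
          q.eval (k : ℂ) * w ℓ' k = 0) ∧
    ∀ Q : Polynomial ℂ, Q.degree < ((∑ i, n i : ℕ) : WithBot ℕ) →
      (∀ ℓ : Fin r, ∀ q : Polynomial ℂ, q.degree < ((n ℓ - 1 : ℕ) : WithBot ℕ) →
        ∑' k : ℕ, Q.eval (k : ℂ) * q.eval (k : ℂ) * w ℓ k = 0) →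
      ∃! c : Fin r → ℂ,
        Q = ∑ ℓ : Fin r, c ℓ • P (fun i => n i - if i = ℓ then 1 else 0) := by
  have hw : ∀ ℓ : Fin r, Mom (w ℓ) := fun ℓ j => hmom j ℓ
  set ν : Fin r → Fin r → ℕ := fun ℓ i => n i - if i = ℓ then 1 else 0 with hνdef
  set N : ℕ := ∑ i, n i with hNdef
  have hN1 : 1 ≤ N := by
    calc 1 ≤ n ⟨0, hr⟩ := hn _
    _ ≤ N := Finset.single_le_sum (fun i _ => Nat.zero_le _) (Finset.mem_univ _)
  have hνsum : ∀ ℓ, ∑ i, ν ℓ i = N - 1 := fun ℓ => sum_sub_ite n ℓ (hn ℓ)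
  -- degree facts
  have hPdeg : ∀ ℓ, (P (ν ℓ)).natDegree = N - 1 := fun ℓ => by
    rw [(hP (ν ℓ)).2.1, hνsum ℓ]
  have hPdegN : ∀ ℓ, (P (ν ℓ)).degree < (N : WithBot ℕ) := fun ℓ => by
    refine (Polynomial.natDegree_lt_iff_degree_lt (hP (ν ℓ)).1.ne_zero).mp ?_
    rw [hPdeg ℓ]; omega
  -- the P (ν ℓ) satisfy the orthogonality conditions of V (in T-form)
  have hPorthV : ∀ ℓ ℓ' : Fin r, ∀ q : Polynomial ℂ,
      q.degree < ((n ℓ' - 1 : ℕ) : WithBot ℕ) → T (w ℓ') (P (ν ℓ) * q) = 0 := by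
    intro ℓ ℓ' q hq
    refine (isMultiOrth_iff w (ν ℓ) (P (ν ℓ))).mp (hP (ν ℓ)).2.2.1 ℓ' q (hq.trans_le ?_)
    have : n ℓ' - 1 ≤ ν ℓ ℓ' := by simp only [hνdef]; split <;> omega
    exact_mod_cast this
  -- orthogonality of P (ν ℓ') against w ℓ for the crucial monomial, when ℓ' ≠ ℓ
  have hXpow : ∀ ℓ : Fin r, ((X : Polynomial ℂ) ^ (n ℓ - 1)).degree
      = ((n ℓ - 1 : ℕ) : WithBot ℕ) := fun ℓ => Polynomial.degree_X_pow _
  have hφcross : ∀ ℓ ℓ' : Fin r, ℓ' ≠ ℓ →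
      T (w ℓ) (P (ν ℓ') * X ^ (n ℓ - 1)) = 0 := by
    intro ℓ ℓ' hne
    refine (isMultiOrth_iff w (ν ℓ') (P (ν ℓ'))).mp (hP (ν ℓ')).2.2.1 ℓ _ ?_
    rw [hXpow]
    have hν : ν ℓ' ℓ = n ℓ := by simp only [hνdef]; rw [if_neg (Ne.symm hne)]; omega
    rw [hν]
    exact_mod_cast Nat.sub_lt (hn ℓ) one_pos
  -- the key nonvanishing
  have hφne : ∀ ℓ : Fin r, T (w ℓ) (P (ν ℓ) * X ^ (n ℓ - 1)) ≠ 0 := by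
    intro ℓ h0
    -- then P (ν ℓ) would be fully n-orthogonal
    have horthn : IsMultiOrth w n (P (ν ℓ)) := by
      rw [isMultiOrth_iff]
      intro ℓ' q hq
      by_cases hℓ' : ℓ = ℓ'
      · subst hℓ'
        -- split q at the coefficient of degree n ℓ - 1
        set p : ℕ := n ℓ - 1 with hpdef
        set a : ℂ := q.coeff p with hadef
        set q' : Polynomial ℂ := q - Polynomial.C a * X ^ p with hq'def
        have hqsplit : q = q' + Polynomial.C a * X ^ p := by rw [hq'def]; ring
        have hq'deg : q'.degree < (p : WithBot ℕ) := by
          rw [Polynomial.degree_lt_iff_coeff_zero]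
          intro j hj
          have hj' : p ≤ j := by exact_mod_cast hj
          rw [hq'def]
          simp only [Polynomial.coeff_sub, Polynomial.coeff_C_mul, Polynomial.coeff_X_pow]
          rcases eq_or_lt_of_le hj' with hj2 | hj2
          · simp [← hj2, hadef]
          · have hqj : q.coeff j = 0 := by
              refine (Polynomial.degree_lt_iff_coeff_zero q _).mp hq j ?_
              have : n ℓ ≤ j := by omega
              exact_mod_cast this
            rw [hqj, if_neg (by omega)]
            simp
        rw [hqsplit, mul_add, T_add (hw ℓ), hPorthV ℓ ℓ q' hq'deg,
          show P (ν ℓ) * (Polynomial.C a * X ^ p) = a • (P (ν ℓ) * X ^ p) by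
            rw [Polynomial.smul_eq_C_mul]; ring,
          T_smul, h0, mul_zero, add_zero]
      · refine (isMultiOrth_iff w (ν ℓ) (P (ν ℓ))).mp (hP (ν ℓ)).2.2.1 ℓ' q ?_
        have hν : ν ℓ ℓ' = n ℓ' := by
          simp only [hνdef]; rw [if_neg fun hh => hℓ' hh.symm]; omega
        rw [← hν] at hq
        exact hq
    have := eq_zero_of_orth w hw P hP N n hNdef.symm (P (ν ℓ)) (hPdegN ℓ) horthn
    exact (hP (ν ℓ)).1.ne_zero this
  -- linear independence
  have hLI : LinearIndependent ℂ (fun ℓ : Fin r => P (ν ℓ)) := by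
    rw [Fintype.linearIndependent_iff]
    intro g hg ℓ
    have hT : T (w ℓ) ((∑ ℓ' : Fin r, g ℓ' • P (ν ℓ')) * X ^ (n ℓ - 1)) = 0 := by
      rw [hg]; simp [T, Polynomial.eval_zero]
    rw [Finset.sum_mul] at hT
    have hrw : ∀ ℓ' : Fin r, (g ℓ' • P (ν ℓ')) * X ^ (n ℓ - 1)
        = g ℓ' • (P (ν ℓ') * X ^ (n ℓ - 1)) := fun ℓ' => smul_mul_assoc _ _ _
    simp only [hrw] at hT
    rw [T_sum (hw ℓ)] at hT
    simp only [T_smul] at hT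
    rw [Finset.sum_eq_single ℓ (fun ℓ' _ hne => by rw [hφcross ℓ ℓ' hne, mul_zero])
      (fun h => absurd (Finset.mem_univ ℓ) h)] at hT
    exact (mul_eq_zero.mp hT).resolve_right (hφne ℓ)
  refine ⟨hLI, fun ℓ => ⟨hPdegN ℓ, fun ℓ' q hq => by
    have := hPorthV ℓ ℓ' q hq; rwa [T_mul] at this⟩, ?_⟩
  -- existence and uniqueness
  intro Q hQdeg hQorth
  -- rewrite hypothesis in T-form
  have hQorthT : ∀ ℓ : Fin r, ∀ q : Polynomial ℂ, q.degree < ((n ℓ - 1 : ℕ) : WithBot ℕ) →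
      T (w ℓ) (Q * q) = 0 := by
    intro ℓ q hq
    rw [T_mul]
    exact hQorth ℓ q hq
  set c : Fin r → ℂ := fun ℓ =>
    T (w ℓ) (Q * X ^ (n ℓ - 1)) / T (w ℓ) (P (ν ℓ) * X ^ (n ℓ - 1)) with hcdef
  set R : Polynomial ℂ := Q - ∑ ℓ : Fin r, c ℓ • P (ν ℓ) with hRdef
  have hTcomb : ∀ ℓ0 : Fin r, ∀ q : Polynomial ℂ,
      T (w ℓ0) (R * q) = T (w ℓ0) (Q * q) - ∑ ℓ : Fin r, c ℓ * T (w ℓ0) (P (ν ℓ) * q) := by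
    intro ℓ0 q
    rw [hRdef, sub_mul, T_sub (hw ℓ0), Finset.sum_mul]
    congr 1
    rw [show (∑ ℓ : Fin r, (c ℓ • P (ν ℓ)) * q) = ∑ ℓ : Fin r, c ℓ • (P (ν ℓ) * q) by
      exact Finset.sum_congr rfl fun ℓ _ => smul_mul_assoc _ _ _, T_sum (hw ℓ0)]
    exact Finset.sum_congr rfl fun ℓ _ => T_smul _ _
  have hRdeg : R.degree < (N : WithBot ℕ) := by
    rw [hRdef]
    refine lt_of_le_of_lt (Polynomial.degree_sub_le _ _) (max_lt hQdeg ?_)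
    refine lt_of_le_of_lt (Polynomial.degree_sum_le _ _) ?_
    rw [Finset.sup_lt_iff (by exact_mod_cast WithBot.bot_lt_coe N)]
    intro ℓ _
    exact lt_of_le_of_lt (Polynomial.degree_smul_le _ _) (hPdegN ℓ)
  have hRorth : IsMultiOrth w n R := by
    rw [isMultiOrth_iff]
    intro ℓ q hq
    set p : ℕ := n ℓ - 1 with hpdef
    set a : ℂ := q.coeff p with hadef
    set q' : Polynomial ℂ := q - Polynomial.C a * X ^ p with hq'def
    have hqsplit : q = q' + Polynomial.C a * X ^ p := by rw [hq'def]; ring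
    have hq'deg : q'.degree < (p : WithBot ℕ) := by
      rw [Polynomial.degree_lt_iff_coeff_zero]
      intro j hj
      have hj' : p ≤ j := by exact_mod_cast hj
      rw [hq'def]
      simp only [Polynomial.coeff_sub, Polynomial.coeff_C_mul, Polynomial.coeff_X_pow]
      rcases eq_or_lt_of_le hj' with hj2 | hj2
      · simp [← hj2, hadef]
      · have hqj : q.coeff j = 0 := by
          refine (Polynomial.degree_lt_iff_coeff_zero q _).mp hq j ?_
          have : n ℓ ≤ j := by omega
          exact_mod_cast this
        rw [hqj, if_neg (by omega)]
        simp
    have hq'part : T (w ℓ) (R * q') = 0 := by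
      rw [hTcomb ℓ q', hQorthT ℓ q' hq'deg,
        Finset.sum_eq_zero fun ℓ' _ => by rw [hPorthV ℓ' ℓ q' hq'deg, mul_zero], sub_zero]
    have hXpart : T (w ℓ) (R * X ^ p) = 0 := by
      rw [hTcomb ℓ (X ^ p),
        Finset.sum_eq_single ℓ (fun ℓ' _ hne => by rw [hφcross ℓ ℓ' hne, mul_zero])
          (fun h => absurd (Finset.mem_univ ℓ) h),
        hcdef]
      simp only
      rw [div_mul_cancel₀ _ (hφne ℓ), sub_self]
    rw [hqsplit, mul_add, T_add (hw ℓ), hq'part, zero_add,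
      show R * (Polynomial.C a * X ^ p) = a • (R * X ^ p) by
        rw [Polynomial.smul_eq_C_mul]; ring,
      T_smul, hXpart, mul_zero]
  have hR0 : R = 0 := eq_zero_of_orth w hw P hP N n hNdef.symm R hRdeg hRorth
  have hQeq : Q = ∑ ℓ : Fin r, c ℓ • P (ν ℓ) := by
    have := sub_eq_zero.mp hR0
    exact this
  refine ⟨c, hQeq, ?_⟩
  intro c' hc'
  have hsum : ∑ ℓ : Fin r, (c' ℓ - c ℓ) • P (ν ℓ) = 0 := by
    have : ∑ ℓ : Fin r, (c' ℓ - c ℓ) • P (ν ℓ)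
        = (∑ ℓ : Fin r, c' ℓ • P (ν ℓ)) - ∑ ℓ : Fin r, c ℓ • P (ν ℓ) := by
      rw [← Finset.sum_sub_distrib]
      exact Finset.sum_congr rfl fun ℓ _ => sub_smul _ _ _
    rw [this, ← hc', ← hQeq, sub_self]
  have := Fintype.linearIndependent_iff.mp hLI (fun ℓ => c' ℓ - c ℓ) hsum
  funext ℓ
  exact sub_eq_zero.mp (this ℓ)
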